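/- If V₂ ⊥ A | (W, V₁, Yₐ) and A=a implies Y=Yₐ, then P(V₂=v₂ | Yₐ=1, V₁=v₁, W=w) = P(V₂=v₂ | Y=1, A=a, V₁=v₁, W=w) whenever P(Yₐ=1, A=a, V₁=v₁, W=w) > 0. -/

import Mathlib

open scoped Classical BigOperators

/-- Probability of an event under finite weights. -/
noncomputable def Pr {Ω : Type*} [Fintype Ω] (p : Ω → ℝ) (E : Ω → Prop) : ℝ :=
  ∑ ω : Ω, if E ω then p ω else 0

/-- Conditional probability P(E | F). -/
noncomputable def cPr {Ω : Type*} [Fintype Ω] (p : Ω → ℝ) (E F : Ω → Prop) : ℝ :=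
  Pr p (fun ω => E ω ∧ F ω) / Pr p F

/-- Conditional expectation E[X | F]. -/
noncomputable def cE {Ω : Type*} [Fintype Ω] (p : Ω → ℝ) (X : Ω → ℝ) (F : Ω → Prop) : ℝ :=
  (∑ ω : Ω, if F ω then p ω * X ω else 0) / Pr p F


lemma Pr_congr {Ω : Type*} [Fintype Ω] (p : Ω → ℝ) {E F : Ω → Prop}
    (h : ∀ ω, E ω ↔ F ω) : Pr p E = Pr p F := by
  unfold Pr; apply Finset.sum_congr rfl; intro ω _; simp [h ω]

lemma Pr_mono {Ω : Type*} [Fintype Ω] (p : Ω → ℝ) (hp : ∀ ω, 0 ≤ p ω) {E F : Ω → Prop}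
    (h : ∀ ω, E ω → F ω) : Pr p E ≤ Pr p F := by
  unfold Pr; apply Finset.sum_le_sum; intro ω _
  by_cases hE : E ω
  · simp [hE, h ω hE]
  · simp [hE]; split <;> [exact hp ω; exact le_refl 0]

/-- under V₂ ⊥ A | (W,V₁,Yₐ) and consistency,
P(V₂=v₂ | Yₐ=1, V₁=v₁, W=w) = P(V₂=v₂ | Y=1, A=a, V₁=v₁, W=w). -/
theorem stmt12 {Ω 𝒲 𝒱₁ 𝒱₂ : Type*} [Fintype Ω] (p : Ω → ℝ)
    (hp : ∀ ω, 0 ≤ p ω) (hp1 : ∑ ω, p ω = 1)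
    (W : Ω → 𝒲) (V1 : Ω → 𝒱₁) (V2 : Ω → 𝒱₂) (A Y Ya : Ω → Fin 2) (a : Fin 2)
    (hconsistency : ∀ ω, A ω = a → Y ω = Ya ω)
    (hAmod : ∀ (v2' : 𝒱₂) (a' y : Fin 2) (w : 𝒲) (u : 𝒱₁),
      0 < Pr p (fun ω => W ω = w ∧ V1 ω = u ∧ Ya ω = y) →
      cPr p (fun ω => V2 ω = v2' ∧ A ω = a') (fun ω => W ω = w ∧ V1 ω = u ∧ Ya ω = y) =
        cPr p (fun ω => V2 ω = v2') (fun ω => W ω = w ∧ V1 ω = u ∧ Ya ω = y) *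
          cPr p (fun ω => A ω = a') (fun ω => W ω = w ∧ V1 ω = u ∧ Ya ω = y))
    (v1 : 𝒱₁) (v2 : 𝒱₂) (w : 𝒲)
    (hpos : 0 < Pr p (fun ω => Ya ω = 1 ∧ A ω = a ∧ V1 ω = v1 ∧ W ω = w)) :
    cPr p (fun ω => V2 ω = v2) (fun ω => Ya ω = 1 ∧ V1 ω = v1 ∧ W ω = w) =
      cPr p (fun ω => V2 ω = v2) (fun ω => Y ω = 1 ∧ A ω = a ∧ V1 ω = v1 ∧ W ω = w) := by
  set F : Ω → Prop := fun ω => W ω = w ∧ V1 ω = v1 ∧ Ya ω = 1 with hFdef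
  have hAF : 0 < Pr p (fun ω => A ω = a ∧ F ω) := by
    calc (0:ℝ) < Pr p (fun ω => Ya ω = 1 ∧ A ω = a ∧ V1 ω = v1 ∧ W ω = w) := hpos
    _ ≤ _ := le_of_eq (Pr_congr p (by intro ω; simp [hFdef]; tauto))
  have hF : 0 < Pr p F := lt_of_lt_of_le hAF (Pr_mono p hp (fun ω h => h.2))
  have h := hAmod v2 a 1 w v1 hF
  have hVAF : Pr p (fun ω => (V2 ω = v2 ∧ A ω = a) ∧ F ω)
      = Pr p (fun ω => V2 ω = v2 ∧ A ω = a ∧ F ω) := Pr_congr p (by intro ω; tauto)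
  have hL : cPr p (fun ω => V2 ω = v2) (fun ω => Ya ω = 1 ∧ V1 ω = v1 ∧ W ω = w)
      = Pr p (fun ω => V2 ω = v2 ∧ F ω) / Pr p F := by
    unfold cPr
    rw [Pr_congr p (E := fun ω => V2 ω = v2 ∧ Ya ω = 1 ∧ V1 ω = v1 ∧ W ω = w)
        (F := fun ω => V2 ω = v2 ∧ F ω) (by intro ω; simp [hFdef]; tauto),
      Pr_congr p (E := fun ω => Ya ω = 1 ∧ V1 ω = v1 ∧ W ω = w) (F := F)
        (by intro ω; simp [hFdef]; tauto)]
  have hR : cPr p (fun ω => V2 ω = v2) (fun ω => Y ω = 1 ∧ A ω = a ∧ V1 ω = v1 ∧ W ω = w)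
      = Pr p (fun ω => V2 ω = v2 ∧ A ω = a ∧ F ω) / Pr p (fun ω => A ω = a ∧ F ω) := by
    unfold cPr
    rw [Pr_congr p (E := fun ω => V2 ω = v2 ∧ Y ω = 1 ∧ A ω = a ∧ V1 ω = v1 ∧ W ω = w)
        (F := fun ω => V2 ω = v2 ∧ A ω = a ∧ F ω)
        (by intro ω; simp only [hFdef]
            constructor
            · rintro ⟨h1, h2, h3, h4, h5⟩
              exact ⟨h1, h3, h5, h4, (hconsistency ω h3) ▸ h2⟩
            · rintro ⟨h1, h2, h3, h4, h5⟩
              exact ⟨h1, (hconsistency ω h2).symm ▸ h5, h2, h4, h3⟩),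
      Pr_congr p (E := fun ω => Y ω = 1 ∧ A ω = a ∧ V1 ω = v1 ∧ W ω = w)
        (F := fun ω => A ω = a ∧ F ω)
        (by intro ω; simp only [hFdef]
            constructor
            · rintro ⟨h1, h2, h3, h4⟩
              exact ⟨h2, h4, h3, (hconsistency ω h2) ▸ h1⟩
            · rintro ⟨h1, h2, h3, h4⟩
              exact ⟨(hconsistency ω h1).symm ▸ h4, h1, h3, h2⟩)]
  rw [hL, hR]
  unfold cPr at h
  rw [hVAF] at h
  have e1 : (Pr p fun ω => V2 ω = v2 ∧ W ω = w ∧ V1 ω = v1 ∧ Ya ω = 1)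
      = Pr p (fun ω => V2 ω = v2 ∧ F ω) := rfl
  have e2 : (Pr p fun ω => A ω = a ∧ W ω = w ∧ V1 ω = v1 ∧ Ya ω = 1)
      = Pr p (fun ω => A ω = a ∧ F ω) := rfl
  have e3 : (Pr p fun ω => W ω = w ∧ V1 ω = v1 ∧ Ya ω = 1) = Pr p F := rfl
  have hFne := ne_of_gt hF
  have hAFne := ne_of_gt hAF
  field_simp at h
  rw [e1, e2, e3] at h
  have key : Pr p (fun ω => V2 ω = v2 ∧ A ω = a ∧ F ω) * Pr p F
      = Pr p (fun ω => V2 ω = v2 ∧ F ω) * Pr p (fun ω => A ω = a ∧ F ω) :=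
    mul_right_cancel₀ hFne (by rw [div_eq_div_iff hFne (pow_ne_zero 2 hFne)] at h; linear_combination h)
  field_simp
  linear_combination -key
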